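/- Let k ≥ 2 and let Θ_i : E_i → E_{i+1} (i = 1, …, k) be contractions between complex Hilbert spaces, Θ := Θ_k ⋯ Θ_1. Then Θ = Θ_k ⋯ Θ_1 is a k-regular factorization if and only if the two-factor factorization Θ = Θ_k · (Θ_{k-1} ⋯ Θ_1) is 2-regular and the factorization Θ_{k-1} ⋯ Θ_1 (of the contraction Θ_{k-1}⋯Θ_1) is (k−1)-regular. -/

import Mathlib

noncomputable section
open ContinuousLinearMap

section Defect
variable {H K : Type*} [NormedAddCommGroup H] [InnerProductSpace ℂ H] [CompleteSpace H]
  [NormedAddCommGroup K] [InnerProductSpace ℂ K] [CompleteSpace K]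

/-- The defect operator `Δ_A := (I - A*A)^{1/2}` of a contraction `A : H → K`. -/
noncomputable def defect (A : H →L[ℂ] K) : H →L[ℂ] H :=
  CFC.sqrt (1 - (ContinuousLinearMap.adjoint A).comp A)

/-- Closure of the range of an operator, as a submodule. -/
noncomputable def clRan (A : H →L[ℂ] K) : Submodule ℂ K :=
  (LinearMap.range (A : H →ₗ[ℂ] K)).topologicalClosure

theorem defect_mem_clRan (A : H →L[ℂ] K) (x : H) : defect A x ∈ clRan (defect A) :=
  Submodule.le_topologicalClosure _ (LinearMap.mem_range_self (defect A : H →ₗ[ℂ] H) x)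

instance clRan_completeSpace (A : H →L[ℂ] K) : CompleteSpace (clRan A) :=
  (Submodule.isClosed_topologicalClosure _).completeSpace_coe
end Defect
section Chain
variable {E : ℕ → Type*} [∀ n, NormedAddCommGroup (E n)] [∀ n, InnerProductSpace ℂ (E n)]
  [∀ n, CompleteSpace (E n)]

/-- Transport along an equality of indices. -/
def castCLM {a b : ℕ} (h : a = b) : E a →L[ℂ] E b := by
  subst h; exact ContinuousLinearMap.id ℂ (E a)

/-- `segProd Θ a m = Θ_{a+m} ∘ ⋯ ∘ Θ_{a+1} : E a → E (a+m)` (in `1`-based notation):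
the composition of `m` successive operators of the chain starting at index `a`. -/
noncomputable def segProd (Θ : ∀ n, E n →L[ℂ] E (n + 1)) (a : ℕ) :
    ∀ m : ℕ, E a →L[ℂ] E (a + m)
  | 0 => ContinuousLinearMap.id ℂ (E a)
  | m + 1 => (Θ (a + m)).comp (segProd Θ a m)

/-- `chainProd Θ a b : E a → E b` is the composition of the operators of the chain
leading from `E a` to `E b` (for `a ≤ b`; junk value `0` otherwise). -/
noncomputable def chainProd (Θ : ∀ n, E n →L[ℂ] E (n + 1)) (a b : ℕ) : E a →L[ℂ] E b :=
  if h : a ≤ b then (castCLM (Nat.add_sub_cancel' h)).comp (segProd Θ a (b - a)) else 0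

/-- The tuple `(Δ_k Θ_{k-1}⋯Θ_1 f, …, Δ_2 Θ_1 f, Δ_1 f)` (component `i : Fin k`
corresponds to the `(i+1)`-st factor, in `1`-based notation) in the Hilbert (ℓ²)
direct sum of the closures of the ranges of the defect operators of the factors. -/
noncomputable def regTuple (Θ : ∀ n, E n →L[ℂ] E (n + 1)) (k : ℕ) (f : E 0) :
    PiLp 2 (fun i : Fin k => clRan (defect (Θ (i : ℕ)))) :=
  WithLp.toLp 2 (fun i => ⟨defect (Θ (i : ℕ)) (chainProd Θ 0 (i : ℕ) f), defect_mem_clRan _ _⟩)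

/-- `k`-regularity of the factorization `Θ_k ⋯ Θ_1`: the set
`{Δ_k Θ_{k-1}⋯Θ_1 f ⊕ ⋯ ⊕ Δ_2 Θ_1 f ⊕ Δ_1 f : f ∈ E_1}` is dense in the Hilbert
direct sum `(cl ran Δ_k) ⊕ ⋯ ⊕ (cl ran Δ_1)`. -/
def IsRegularFact (Θ : ∀ n, E n →L[ℂ] E (n + 1)) (k : ℕ) : Prop :=
  DenseRange (regTuple Θ k)

end Chain
section TwoRegular
variable {H F K : Type*} [NormedAddCommGroup H] [InnerProductSpace ℂ H] [CompleteSpace H]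
  [NormedAddCommGroup F] [InnerProductSpace ℂ F] [CompleteSpace F]
  [NormedAddCommGroup K] [InnerProductSpace ℂ K] [CompleteSpace K]

/-- `2`-regularity of the factorization `A = A₂ A₁`: density of
`{Δ_{A₂} A₁ h ⊕ Δ_{A₁} h : h ∈ H}` in the Hilbert direct sum
`(cl ran Δ_{A₂}) ⊕₂ (cl ran Δ_{A₁})`. -/
def IsTwoRegular (A₁ : H →L[ℂ] F) (A₂ : F →L[ℂ] K) : Prop :=
  DenseRange (fun h : H =>
    ((WithLp.equiv 2 (clRan (defect A₂) × clRan (defect A₁))).symm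
      (⟨defect A₂ (A₁ h), defect_mem_clRan _ _⟩, ⟨defect A₁ h, defect_mem_clRan _ _⟩)))

end TwoRegular

section AuxDensity

/-- Transfer of `DenseRange` along a homeomorphism. -/
theorem denseRange_homeo_comp_iff {X Y Z : Type*} [TopologicalSpace X] [TopologicalSpace Y]
    (e : X ≃ₜ Y) (f : Z → X) : DenseRange (fun a => e (f a)) ↔ DenseRange f := by
  constructor
  · intro h
    have h2 : DenseRange (⇑e.symm ∘ fun a => e (f a)) :=
      DenseRange.comp e.symm.surjective.denseRange h e.symm.continuous
    have h3 : (⇑e.symm ∘ fun a => e (f a)) = f := funext fun a => e.symm_apply_apply (f a)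
    rwa [h3] at h2
  · intro h
    exact DenseRange.comp e.surjective.denseRange h e.continuous

/-- Abstract density-transfer lemma: if `v` and `w` are "isometrically equivalent"
coordinates and `v` has dense range, then density of `(u, w)` is equivalent to density of
`(u, v)` together with density of `w`. -/
theorem dense_pair_iff {Z A B C : Type*} [PseudoMetricSpace A] [PseudoMetricSpace B]
    [PseudoMetricSpace C] [Nonempty A] (u : Z → A) (v : Z → B) (w : Z → C)
    (hvw : ∀ f g : Z, dist (v f) (v g) = dist (w f) (w g)) (hv : DenseRange v) :
    DenseRange (fun f => (u f, w f)) ↔ (DenseRange (fun f => (u f, v f)) ∧ DenseRange w) := by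
  constructor
  · intro h
    have hw : DenseRange w := by
      have h2 : DenseRange (Prod.snd ∘ fun f : Z => (u f, w f)) :=
        DenseRange.comp Prod.snd_surjective.denseRange h continuous_snd
      exact h2
    refine ⟨Metric.denseRange_iff.2 fun p ε hε => ?_, hw⟩
    obtain ⟨f0, hf0⟩ := Metric.denseRange_iff.1 hv p.2 (ε / 2) (by positivity)
    obtain ⟨f, hf⟩ := Metric.denseRange_iff.1 h (p.1, w f0) (ε / 2) (by positivity)
    rw [Prod.dist_eq, max_lt_iff] at hf
    refine ⟨f, ?_⟩
    rw [Prod.dist_eq, max_lt_iff]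
    refine ⟨hf.1.trans (half_lt_self hε), ?_⟩
    calc dist p.2 (v f) ≤ dist p.2 (v f0) + dist (v f0) (v f) := dist_triangle _ _ _
      _ = dist p.2 (v f0) + dist (w f0) (w f) := by rw [hvw]
      _ < ε / 2 + ε / 2 := add_lt_add hf0 hf.2
      _ = ε := by ring
  · rintro ⟨hα, hw⟩
    refine Metric.denseRange_iff.2 fun p ε hε => ?_
    obtain ⟨f0, hf0⟩ := Metric.denseRange_iff.1 hw p.2 (ε / 2) (by positivity)
    obtain ⟨f, hf⟩ := Metric.denseRange_iff.1 hα (p.1, v f0) (ε / 2) (by positivity)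
    rw [Prod.dist_eq, max_lt_iff] at hf
    refine ⟨f, ?_⟩
    rw [Prod.dist_eq, max_lt_iff]
    refine ⟨hf.1.trans (half_lt_self hε), ?_⟩
    calc dist p.2 (w f) ≤ dist p.2 (w f0) + dist (w f0) (w f) := dist_triangle _ _ _
      _ = dist p.2 (w f0) + dist (v f0) (v f) := by rw [hvw]
      _ < ε / 2 + ε / 2 := add_lt_add hf0 hf.2
      _ = ε := by ring

/-- Splitting off the last coordinate of an `L²` pi-type, as a homeomorphism. -/
noncomputable def pilpSplitLast {m : ℕ} (G : Fin (m + 1) → Type*)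
    [∀ i, NormedAddCommGroup (G i)] :
    PiLp 2 G ≃ₜ G (Fin.last m) × PiLp 2 (fun i : Fin m => G i.castSucc) where
  toFun x := (x (Fin.last m), WithLp.toLp 2 fun i => x i.castSucc)
  invFun p := WithLp.toLp 2 (Fin.snoc (fun i => p.2 i) p.1)
  left_inv x := by
    refine (WithLp.ext_iff _).2 ?_
    funext i
    induction i using Fin.lastCases with
    | last => exact Fin.snoc_last _ _
    | cast i => exact Fin.snoc_castSucc _ _ i
  right_inv p := by
    refine Prod.ext ?_ ?_
    · exact Fin.snoc_last _ _
    · exact (WithLp.ext_iff _).2 (funext fun i => Fin.snoc_castSucc _ _ i)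
  continuous_toFun := by
    refine Continuous.prodMk ?_ ?_
    · exact (continuous_apply (Fin.last m)).comp (PiLp.continuous_ofLp 2 G)
    · exact (PiLp.continuous_toLp 2 _).comp
        ((continuous_pi fun i : Fin m => continuous_apply i.castSucc).comp (PiLp.continuous_ofLp 2 G))
  continuous_invFun := by
    refine (PiLp.continuous_toLp 2 G).comp ?_
    refine continuous_pi fun i => ?_
    induction i using Fin.lastCases with
    | last =>
      have h : (fun p : G (Fin.last m) × PiLp 2 (fun i : Fin m => G i.castSucc) =>
          Fin.snoc (α := G) (fun i => p.2 i) p.1 (Fin.last m)) = fun p => p.1 :=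
        funext fun p => Fin.snoc_last _ _
      rw [h]
      exact continuous_fst
    | cast i =>
      have h : (fun p : G (Fin.last m) × PiLp 2 (fun i : Fin m => G i.castSucc) =>
          Fin.snoc (α := G) (fun i => p.2 i) p.1 i.castSucc) = fun p => p.2 i :=
        funext fun p => Fin.snoc_castSucc _ _ i
      rw [h]
      exact (continuous_apply i).comp ((PiLp.continuous_ofLp 2 _).comp continuous_snd)

end AuxDensity
section DefectLemmas

open scoped InnerProductSpace

variable {H K : Type*} [NormedAddCommGroup H] [InnerProductSpace ℂ H] [CompleteSpace H]
  [NormedAddCommGroup K] [InnerProductSpace ℂ K] [CompleteSpace K]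

theorem one_sub_adjoint_comp_nonneg (A : H →L[ℂ] K) (hA : ‖A‖ ≤ 1) :
    (0 : H →L[ℂ] H) ≤ 1 - (ContinuousLinearMap.adjoint A).comp A := by
  rw [ContinuousLinearMap.nonneg_iff_isPositive, ContinuousLinearMap.isPositive_def']
  constructor
  · rw [isSelfAdjoint_iff, star_sub, star_one, ContinuousLinearMap.star_eq_adjoint,
      ContinuousLinearMap.adjoint_comp, ContinuousLinearMap.adjoint_adjoint]
  · intro x
    have hx : ‖A x‖ ≤ ‖x‖ := by
      calc ‖A x‖ ≤ ‖A‖ * ‖x‖ := A.le_opNorm x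
        _ ≤ 1 * ‖x‖ := mul_le_mul_of_nonneg_right hA (norm_nonneg x)
        _ = ‖x‖ := one_mul _
    have h1 : ((1 - (ContinuousLinearMap.adjoint A).comp A) x) =
        x - (ContinuousLinearMap.adjoint A) (A x) := rfl
    rw [ContinuousLinearMap.reApplyInnerSelf_apply, h1, inner_sub_left,
      ContinuousLinearMap.adjoint_inner_left, map_sub, inner_self_eq_norm_sq (𝕜 := ℂ),
      inner_self_eq_norm_sq (𝕜 := ℂ)]
    have := pow_le_pow_left₀ (norm_nonneg (A x)) hx 2
    linarith [pow_le_pow_left₀ (norm_nonneg (A x)) hx 2]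

theorem norm_defect_apply_sq (A : H →L[ℂ] K) (hA : ‖A‖ ≤ 1) (x : H) :
    ‖defect A x‖ ^ 2 = ‖x‖ ^ 2 - ‖A x‖ ^ 2 := by
  have hnn := one_sub_adjoint_comp_nonneg A hA
  have hsq : defect A * defect A = 1 - (ContinuousLinearMap.adjoint A).comp A := by
    have h := CFC.sq_sqrt (1 - (ContinuousLinearMap.adjoint A).comp A) hnn
    rwa [sq] at h
  have hsa : IsSelfAdjoint (defect A) :=
    ((ContinuousLinearMap.nonneg_iff_isPositive (defect A)).mp (CFC.sqrt_nonneg _)).isSelfAdjoint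
  have h1 : ⟪defect A x, defect A x⟫_ℂ = ⟪x, x⟫_ℂ - ⟪A x, A x⟫_ℂ := by
    calc ⟪defect A x, defect A x⟫_ℂ
        = ⟪(ContinuousLinearMap.adjoint (defect A)) (defect A x), x⟫_ℂ :=
          (ContinuousLinearMap.adjoint_inner_left _ _ _).symm
      _ = ⟪(defect A * defect A) x, x⟫_ℂ := by rw [hsa.adjoint_eq]; rfl
      _ = ⟪x - (ContinuousLinearMap.adjoint A) (A x), x⟫_ℂ := by rw [hsq]; rfl
      _ = ⟪x, x⟫_ℂ - ⟪(ContinuousLinearMap.adjoint A) (A x), x⟫_ℂ := inner_sub_left _ _ _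
      _ = ⟪x, x⟫_ℂ - ⟪A x, A x⟫_ℂ := by rw [ContinuousLinearMap.adjoint_inner_left]
  rw [← inner_self_eq_norm_sq (𝕜 := ℂ), ← inner_self_eq_norm_sq (𝕜 := ℂ),
    ← inner_self_eq_norm_sq (𝕜 := ℂ), h1, map_sub]

end DefectLemmas
section ChainLemmas

variable {E : ℕ → Type*} [∀ n, NormedAddCommGroup (E n)] [∀ n, InnerProductSpace ℂ (E n)]
  [∀ n, CompleteSpace (E n)]

theorem castCLM_rfl {a : ℕ} (h : a = a) :
    castCLM (E := E) h = ContinuousLinearMap.id ℂ (E a) := rfl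

theorem castCLM_comp_theta (Θ : ∀ n, E n →L[ℂ] E (n + 1)) {a b : ℕ} (h : a = b)
    (h' : a + 1 = b + 1) :
    (castCLM (E := E) h').comp (Θ a) = (Θ b).comp (castCLM (E := E) h) := by
  subst h
  rw [castCLM_rfl, castCLM_rfl]
  ext x
  rfl

theorem chainProd_zero_zero (Θ : ∀ n, E n →L[ℂ] E (n + 1)) :
    chainProd Θ 0 0 = ContinuousLinearMap.id ℂ (E 0) := rfl

theorem chainProd_zero_succ (Θ : ∀ n, E n →L[ℂ] E (n + 1)) (n : ℕ) :
    chainProd Θ 0 (n + 1) = (Θ n).comp (chainProd Θ 0 n) := by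
  have e1 : chainProd Θ 0 (n + 1) =
      (castCLM (E := E) (Nat.add_sub_cancel' (Nat.zero_le (n + 1)))).comp
        ((Θ (0 + n)).comp (segProd Θ 0 n)) := by
    unfold chainProd
    rw [dif_pos (Nat.zero_le (n + 1))]
    rfl
  have e2 : chainProd Θ 0 n =
      (castCLM (E := E) (Nat.add_sub_cancel' (Nat.zero_le n))).comp (segProd Θ 0 n) := by
    unfold chainProd
    rw [dif_pos (Nat.zero_le n)]
    rfl
  rw [e1, e2, ← ContinuousLinearMap.comp_assoc, castCLM_comp_theta Θ (Nat.zero_add n),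
    ContinuousLinearMap.comp_assoc]

theorem chainProd_zero_norm_le (Θ : ∀ n, E n →L[ℂ] E (n + 1)) {n : ℕ}
    (hΘ : ∀ i < n, ‖Θ i‖ ≤ 1) : ‖chainProd Θ 0 n‖ ≤ 1 := by
  induction n with
  | zero => rw [chainProd_zero_zero]; exact ContinuousLinearMap.norm_id_le
  | succ n ih =>
    rw [chainProd_zero_succ]
    refine le_trans (ContinuousLinearMap.opNorm_comp_le _ _) ?_
    have h1 := hΘ n (Nat.lt_succ_self n)
    have h2 := ih fun i hi => hΘ i (hi.trans (Nat.lt_succ_self n))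
    calc ‖Θ n‖ * ‖chainProd Θ 0 n‖ ≤ 1 * 1 :=
          mul_le_mul h1 h2 (norm_nonneg _) zero_le_one
      _ = 1 := one_mul 1

theorem sum_sq_defect (Θ : ∀ n, E n →L[ℂ] E (n + 1)) {n : ℕ}
    (hΘ : ∀ i < n, ‖Θ i‖ ≤ 1) (f : E 0) :
    ∑ i : Fin n, ‖defect (Θ (i : ℕ)) (chainProd Θ 0 (i : ℕ) f)‖ ^ 2
      = ‖f‖ ^ 2 - ‖chainProd Θ 0 n f‖ ^ 2 := by
  induction n with
  | zero => simp [chainProd_zero_zero]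
  | succ n ih =>
    rw [Fin.sum_univ_castSucc]
    simp only [Fin.coe_castSucc, Fin.val_last]
    rw [ih fun i hi => hΘ i (hi.trans (Nat.lt_succ_self n)),
      norm_defect_apply_sq (Θ n) (hΘ n (Nat.lt_succ_self n)), chainProd_zero_succ]
    show _ = ‖f‖ ^ 2 - ‖(Θ n) (chainProd Θ 0 n f)‖ ^ 2
    ring

theorem norm_regTuple (Θ : ∀ n, E n →L[ℂ] E (n + 1)) {n : ℕ}
    (hΘ : ∀ i < n, ‖Θ i‖ ≤ 1) (f : E 0) :
    ‖regTuple Θ n f‖ = ‖defect (chainProd Θ 0 n) f‖ := by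
  rw [← sq_eq_sq₀ (norm_nonneg _) (norm_nonneg _), PiLp.norm_sq_eq_of_L2,
    norm_defect_apply_sq _ (chainProd_zero_norm_le Θ hΘ) f, ← sum_sq_defect Θ hΘ f]
  exact Finset.sum_congr rfl fun i _ => rfl

theorem regTuple_sub (Θ : ∀ n, E n →L[ℂ] E (n + 1)) (n : ℕ) (f g : E 0) :
    regTuple Θ n f - regTuple Θ n g = regTuple Θ n (f - g) := by
  refine (WithLp.ext_iff _).2 (funext fun i => ?_)
  refine Subtype.ext ?_
  have h1 : (regTuple Θ n f - regTuple Θ n g) i = regTuple Θ n f i - regTuple Θ n g i := rfl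
  rw [h1, AddSubgroupClass.coe_sub]
  show defect (Θ (i : ℕ)) (chainProd Θ 0 (i : ℕ) f)
      - defect (Θ (i : ℕ)) (chainProd Θ 0 (i : ℕ) g)
      = defect (Θ (i : ℕ)) (chainProd Θ 0 (i : ℕ) (f - g))
  rw [← map_sub, ← map_sub]

end ChainLemmas
section MainAux

variable {E : ℕ → Type*} [∀ n, NormedAddCommGroup (E n)] [∀ n, InnerProductSpace ℂ (E n)]
  [∀ n, CompleteSpace (E n)]

/-- The "top" component `f ↦ Δ_{Θ_m} (Θ_{m-1}⋯Θ_0 f)`. -/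
noncomputable def topComp (Θ : ∀ n, E n →L[ℂ] E (n + 1)) (m : ℕ) :
    E 0 → clRan (defect (Θ m)) :=
  fun f => ⟨defect (Θ m) (chainProd Θ 0 m f), defect_mem_clRan _ _⟩

/-- The map `f ↦ Δ_{Θ_{m-1}⋯Θ_0} f` into the closure of the range of the defect of the
product. -/
noncomputable def prodDef (Θ : ∀ n, E n →L[ℂ] E (n + 1)) (m : ℕ) :
    E 0 → clRan (defect (chainProd Θ 0 m)) :=
  fun f => ⟨defect (chainProd Θ 0 m) f, defect_mem_clRan _ _⟩

theorem dist_prodDef_eq (Θ : ∀ n, E n →L[ℂ] E (n + 1)) {m : ℕ}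
    (hΘ : ∀ i < m, ‖Θ i‖ ≤ 1) (f g : E 0) :
    dist (prodDef Θ m f) (prodDef Θ m g) = dist (regTuple Θ m f) (regTuple Θ m g) := by
  rw [Subtype.dist_eq, dist_eq_norm, dist_eq_norm]
  show ‖defect (chainProd Θ 0 m) f - defect (chainProd Θ 0 m) g‖ = _
  rw [← map_sub, regTuple_sub]
  exact (norm_regTuple Θ hΘ (f - g)).symm

theorem denseRange_prodDef (Θ : ∀ n, E n →L[ℂ] E (n + 1)) (m : ℕ) :
    DenseRange (prodDef Θ m) := by
  refine Metric.denseRange_iff.2 fun y ε hε => ?_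
  have hy : (y : E 0) ∈ closure (Set.range (defect (chainProd Θ 0 m))) := by
    have h3 : (y : E 0) ∈
        ((LinearMap.range (defect (chainProd Θ 0 m) : E 0 →ₗ[ℂ] E 0)).topologicalClosure : Set (E 0)) := y.2
    rwa [Submodule.topologicalClosure_coe, LinearMap.coe_range] at h3
  obtain ⟨z, hz, hzy⟩ := Metric.mem_closure_iff.1 hy ε hε
  obtain ⟨f, rfl⟩ := hz
  exact ⟨f, by rwa [Subtype.dist_eq]⟩

end MainAux
/-- `Θ = Θ_k ⋯ Θ_1` is `k`-regular iff `Θ = Θ_k · (Θ_{k-1}⋯Θ_1)` is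
`2`-regular and `Θ_{k-1}⋯Θ_1` is `(k-1)`-regular. (Indices are `0`-based here.) -/
theorem isRegularFact_iff_top_split {E : ℕ → Type*}
    [∀ n, NormedAddCommGroup (E n)] [∀ n, InnerProductSpace ℂ (E n)] [∀ n, CompleteSpace (E n)]
    (k : ℕ) (hk : 2 ≤ k) (Θ : ∀ n, E n →L[ℂ] E (n + 1)) (hΘ : ∀ i < k, ‖Θ i‖ ≤ 1) :
    IsRegularFact Θ k ↔
      (IsTwoRegular (chainProd Θ 0 (k - 1)) (Θ (k - 1)) ∧ IsRegularFact Θ (k - 1)) := by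
  obtain ⟨m, rfl⟩ : ∃ m, k = m + 1 := ⟨k - 1, by omega⟩
  show IsRegularFact Θ (m + 1) ↔
    (IsTwoRegular (chainProd Θ 0 m) (Θ m) ∧ IsRegularFact Θ m)
  have hΘm : ∀ i < m, ‖Θ i‖ ≤ 1 := fun i hi => hΘ i (by omega)
  haveI : Nonempty (clRan (defect (Θ m))) := ⟨0⟩
  have h1 : IsRegularFact Θ (m + 1) ↔
      DenseRange (fun f : E 0 => (topComp Θ m f, regTuple Θ m f)) :=
    (denseRange_homeo_comp_iff
      (pilpSplitLast (fun i : Fin (m + 1) => clRan (defect (Θ (i : ℕ)))))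
      (regTuple Θ (m + 1))).symm
  have h2 : IsTwoRegular (chainProd Θ 0 m) (Θ m) ↔
      DenseRange (fun f : E 0 => (topComp Θ m f, prodDef Θ m f)) :=
    denseRange_homeo_comp_iff
      ((WithLp.prodContinuousLinearEquiv 2 ℂ (clRan (defect (Θ m)))
        (clRan (defect (chainProd Θ 0 m)))).symm.toHomeomorph)
      (fun f : E 0 => (topComp Θ m f, prodDef Θ m f))
  rw [h1, h2]
  exact dense_pair_iff (topComp Θ m) (prodDef Θ m) (regTuple Θ m)
    (dist_prodDef_eq Θ hΘm) (denseRange_prodDef Θ m)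

end
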